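/- For every integer k ≥ 2, S_k = (1/2)·log(2k) − (1/2)·∫₀¹ Q_k(t)/(1+t^k) dt, where S_k = Σ_{n=1}^∞ (−1)^{n−1}·(log k − (H_{kn} − H_n)) and Q_k(t) = 1 + t + ⋯ + t^{k−1}. -/

import Mathlib

open Filter Topology intervalIntegral

/-- The `n`-th harmonic number `Hₙ = Σ_{j=1}^n 1/j`. -/
noncomputable def H (n : ℕ) : ℝ := ∑ j ∈ Finset.range n, 1 / ((j : ℝ) + 1)

/-- The polynomial `Q_k(t) = 1 + t + ⋯ + t^{k−1}`. -/
noncomputable def Q (k : ℕ) : ℝ → ℝ := fun t => ∑ i ∈ Finset.range k, t ^ i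

noncomputable def Rk (k : ℕ) : ℝ → ℝ := fun t => ∑ i ∈ Finset.range (k - 1), ((i : ℝ) + 1) * t ^ i

lemma H_add (a b : ℕ) : H (a + b) = H a + ∑ r ∈ Finset.range b, 1 / ((a : ℝ) + r + 1) := by
  induction b with
  | zero => simp [H]
  | succ b ih =>
    rw [← Nat.add_assoc, H, Finset.sum_range_succ, ← H, ih, Finset.sum_range_succ]
    push_cast; ring

lemma H_eq (n : ℕ) : H n = (harmonic n : ℝ) := by
  rw [H, harmonic]
  push_cast
  simp [one_div]

lemma pid1_aux (K : ℕ) (t : ℝ) :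
    (∑ i ∈ Finset.range (K+1), t ^ i) - ((K:ℝ)+1) * t ^ K
      = (1 - t) * ∑ i ∈ Finset.range K, ((i:ℝ)+1) * t ^ i := by
  induction K with
  | zero => simp
  | succ K ih =>
    rw [Finset.sum_range_succ (n := K+1), Finset.sum_range_succ (f := fun i => ((i:ℝ)+1) * t ^ i)]
    push_cast
    push_cast at ih
    linear_combination ih

lemma pid1 (k : ℕ) (hk : 1 ≤ k) (t : ℝ) :
    Q k t - (k:ℝ) * t ^ (k-1) = (1 - t) * Rk k t := by
  obtain ⟨K, rfl⟩ : ∃ K, k = K + 1 := ⟨k - 1, (Nat.succ_pred_eq_of_pos hk).symm⟩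
  have h := pid1_aux K t
  simp only [Q, Rk, Nat.add_sub_cancel]
  push_cast
  linarith [h]

lemma pid2 (K : ℕ) (t : ℝ) : 1 - t ^ K = (1 - t) * Q K t := by
  have h := geom_sum_mul t K
  simp only [Q]
  linear_combination h

lemma one_le_Q {k : ℕ} (hk : 0 < k) {t : ℝ} (ht : 0 ≤ t) : 1 ≤ Q k t := by
  have h0 : (0:ℕ) ∈ Finset.range k := Finset.mem_range.2 hk
  have := Finset.single_le_sum (f := fun i => t ^ i) (fun i _ => pow_nonneg ht i) h0
  simpa [Q] using this

lemma Q_one (k : ℕ) : Q k 1 = k := by simp [Q]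

lemma Q_zero {k : ℕ} (hk : 0 < k) : Q k 0 = 1 := by
  rw [Q, Finset.sum_eq_single 0]
  · simp
  · intro i _ hi; exact zero_pow hi
  · intro h; exact absurd (Finset.mem_range.2 hk) h

lemma Rk_nonneg (k : ℕ) {t : ℝ} (ht : 0 ≤ t) : 0 ≤ Rk k t :=
  Finset.sum_nonneg fun i _ => mul_nonneg (by positivity) (pow_nonneg ht i)

lemma Rk_le_one (k : ℕ) {t : ℝ} (ht : t ∈ Set.Icc (0:ℝ) 1) : Rk k t ≤ Rk k 1 := by
  apply Finset.sum_le_sum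
  intro i _
  simp only [one_pow]
  have := pow_le_one₀ ht.1 ht.2 (n := i)
  nlinarith [this]

lemma hasDerivAt_Q {k : ℕ} (hk : 1 ≤ k) (t : ℝ) : HasDerivAt (Q k) (Rk k t) t := by
  have h : HasDerivAt (fun t : ℝ => ∑ i ∈ Finset.range k, t ^ i)
      (∑ i ∈ Finset.range k, (i:ℝ) * t ^ (i - 1)) t :=
    HasDerivAt.fun_sum fun i _ => hasDerivAt_pow i t
  convert h using 1
  · rfl
  obtain ⟨K, rfl⟩ : ∃ K, k = K + 1 := ⟨k - 1, (Nat.succ_pred_eq_of_pos hk).symm⟩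
  rw [Finset.sum_range_succ' (fun i => (i:ℝ) * t ^ (i - 1)) K]
  simp [Rk]

noncomputable def phi (k : ℕ) : ℝ → ℝ := fun t => t ^ k * Rk k t / (Q k t * (1 + t ^ k))

lemma cont_Q (k : ℕ) : Continuous (Q k) :=
  continuous_finset_sum _ fun i _ => continuous_pow i

lemma cont_Rk (k : ℕ) : Continuous (Rk k) :=
  continuous_finset_sum _ fun i _ => (continuous_const.mul (continuous_pow i))

lemma den_pos {k : ℕ} (hk : 1 ≤ k) {t : ℝ} (ht : t ∈ Set.Icc (0:ℝ) 1) :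
    0 < Q k t * (1 + t ^ k) := by
  have h1 : (1:ℝ) ≤ Q k t := one_le_Q hk ht.1
  have h2 : (0:ℝ) ≤ t ^ k := pow_nonneg ht.1 k
  nlinarith

lemma uIcc01 : Set.uIcc (0:ℝ) 1 = Set.Icc 0 1 := Set.uIcc_of_le zero_le_one

lemma phi_contOn {k : ℕ} (hk : 1 ≤ k) : ContinuousOn (phi k) (Set.uIcc (0:ℝ) 1) := by
  rw [uIcc01]
  apply ContinuousOn.div
  · exact ((continuous_pow k).mul (cont_Rk k)).continuousOn
  · exact ((cont_Q k).mul (continuous_const.add (continuous_pow k))).continuousOn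
  · intro t ht; exact (den_pos hk ht).ne'

lemma ftc_log {k : ℕ} (hk : 1 ≤ k) :
    ∫ t in (0:ℝ)..1, (Rk k t * (1 + t ^ k) + Q k t * ((k:ℝ) * t ^ (k-1))) / (Q k t * (1 + t ^ k))
      = Real.log (2 * k) := by
  have hg : ∀ t ∈ Set.uIcc (0:ℝ) 1,
      HasDerivAt (fun t => Real.log (Q k t * (1 + t ^ k)))
        ((Rk k t * (1 + t ^ k) + Q k t * ((k:ℝ) * t ^ (k-1))) / (Q k t * (1 + t ^ k))) t := by
    intro t ht
    rw [uIcc01] at ht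
    have h1 : HasDerivAt (fun t : ℝ => Q k t * (1 + t ^ k))
        (Rk k t * (1 + t ^ k) + Q k t * ((k:ℝ) * t ^ (k-1))) t :=
      (hasDerivAt_Q hk t).mul ((hasDerivAt_pow k t).const_add 1)
    exact h1.log (den_pos hk ht).ne'
  have hint : IntervalIntegrable
      (fun t => (Rk k t * (1 + t ^ k) + Q k t * ((k:ℝ) * t ^ (k-1))) / (Q k t * (1 + t ^ k)))
      MeasureTheory.volume 0 1 := by
    apply ContinuousOn.intervalIntegrable
    rw [uIcc01]
    apply ContinuousOn.div
    · exact (((cont_Rk k).mul (continuous_const.add (continuous_pow k))).add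
        ((cont_Q k).mul (continuous_const.mul (continuous_pow (k-1))))).continuousOn
    · exact ((cont_Q k).mul (continuous_const.add (continuous_pow k))).continuousOn
    · intro t ht; exact (den_pos hk ht).ne'
  rw [intervalIntegral.integral_eq_sub_of_hasDerivAt hg hint]
  rw [Q_one, Q_zero hk, one_pow, zero_pow (by omega : k ≠ 0)]
  rw [show (k:ℝ) * (1 + 1) = 2 * k by ring]
  simp

lemma qid {k : ℕ} (hk : 1 ≤ k) (t : ℝ) :
    Q k t * (Q k t - (k:ℝ) * t ^ (k-1)) = Rk k t * (1 - t ^ k) := by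
  rw [pid1 k hk t, pid2 k t]; ring

lemma integrand_eq {k : ℕ} (hk : 1 ≤ k) {t : ℝ} (ht : t ∈ Set.Icc (0:ℝ) 1) :
    (Rk k t * (1 + t ^ k) + Q k t * ((k:ℝ) * t ^ (k-1))) / (Q k t * (1 + t ^ k))
      = 2 * phi k t + Q k t / (1 + t ^ k) := by
  have h1 : (1:ℝ) ≤ Q k t := one_le_Q hk ht.1
  have h2 : (0:ℝ) ≤ t ^ k := pow_nonneg ht.1 k
  have hA : Q k t ≠ 0 := by nlinarith
  have hB : (1:ℝ) + t ^ k ≠ 0 := by nlinarith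
  simp only [phi]
  field_simp
  linear_combination (-1) * qid hk t

lemma step_pt {k : ℕ} (hk : 1 ≤ k) (m : ℕ) {t : ℝ} (ht : t ∈ Set.Icc (0:ℝ) 1) :
    phi k t * (1 - t ^ (2*k*(m+1)))
      = phi k t * (1 - t ^ (2*k*m)) + t ^ (2*k*m+k) * (Q k t - (k:ℝ) * t ^ (k-1)) := by
  have h1 : (1:ℝ) ≤ Q k t := one_le_Q hk ht.1
  have h2 : (0:ℝ) ≤ t ^ k := pow_nonneg ht.1 k
  have hA : Q k t ≠ 0 := by nlinarith
  have hB : (1:ℝ) + t ^ k ≠ 0 := by nlinarith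
  simp only [phi]
  field_simp
  linear_combination (-(t ^ (2*k*m)) * (t ^ k + t ^ (2*k))) * qid hk t

lemma mono_sum (k A : ℕ) (t : ℝ) :
    t ^ A * Q k t = ∑ r ∈ Finset.range k, t ^ (A + r) := by
  rw [Q, Finset.mul_sum]
  exact Finset.sum_congr rfl fun r _ => (pow_add t A r).symm

lemma hQdiv_int (k : ℕ) : IntervalIntegrable (fun t => Q k t / (1 + t ^ k))
    MeasureTheory.volume 0 1 := by
  apply ContinuousOn.intervalIntegrable
  rw [uIcc01]
  apply ContinuousOn.div (cont_Q k).continuousOn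
    (continuous_const.add (continuous_pow k)).continuousOn
  intro t ht
  show (1:ℝ) + t ^ k ≠ 0
  have : (0:ℝ) ≤ t ^ k := pow_nonneg ht.1 k
  nlinarith

lemma int_phi {k : ℕ} (hk : 1 ≤ k) :
    (∫ t in (0:ℝ)..1, phi k t)
      = (1/2) * Real.log (2*k) - (1/2) * ∫ t in (0:ℝ)..1, Q k t / (1 + t ^ k) := by
  have hphi : IntervalIntegrable (phi k) MeasureTheory.volume 0 1 := (phi_contOn hk).intervalIntegrable
  have h1 : (∫ t in (0:ℝ)..1, (2 * phi k t + Q k t / (1 + t ^ k))) = Real.log (2*k) := by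
    rw [← ftc_log hk]
    apply intervalIntegral.integral_congr
    intro t ht
    rw [uIcc01] at ht
    exact (integrand_eq hk ht).symm
  rw [intervalIntegral.integral_add (hphi.const_mul 2) (hQdiv_int k),
    intervalIntegral.integral_const_mul] at h1
  linarith

lemma even_sum {k : ℕ} (hk : 2 ≤ k) (m : ℕ) :
    (∑ n ∈ Finset.range (2*m), (-1:ℝ)^n * (Real.log k - (H (k*(n+1)) - H (n+1))))
      = ∫ t in (0:ℝ)..1, phi k t * (1 - t ^ (2*k*m)) := by
  have hk1 : 1 ≤ k := by omega
  induction m with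
  | zero => simp
  | succ m ih =>
    have hPoly : ∀ N : ℕ, IntervalIntegrable (fun t => phi k t * (1 - t ^ N))
        MeasureTheory.volume 0 1 := fun N =>
      ((phi_contOn hk1).mul
        (continuous_const.sub (continuous_pow N)).continuousOn).intervalIntegrable
    have hPint : IntervalIntegrable
        (fun t => t ^ (2*k*m+k) * (Q k t - (k:ℝ) * t ^ (k-1))) MeasureTheory.volume 0 1 :=
      (((continuous_pow _).mul ((cont_Q k).sub
        (continuous_const.mul (continuous_pow _)))).continuousOn).intervalIntegrable
    have hsplit : (∫ t in (0:ℝ)..1, phi k t * (1 - t ^ (2*k*(m+1))))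
        = (∫ t in (0:ℝ)..1, phi k t * (1 - t ^ (2*k*m)))
          + ∫ t in (0:ℝ)..1, t ^ (2*k*m+k) * (Q k t - (k:ℝ) * t ^ (k-1)) := by
      rw [← intervalIntegral.integral_add (hPoly _) hPint]
      apply intervalIntegral.integral_congr
      intro t ht
      rw [uIcc01] at ht
      exact step_pt hk1 m ht
    have hfe : ∀ t : ℝ, t ^ (2*k*m+k) * (Q k t - (k:ℝ) * t ^ (k-1))
        = (∑ r ∈ Finset.range k, t ^ (2*k*m+k+r)) - (k:ℝ) * t ^ (2*k*m+k+(k-1)) := by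
      intro t
      rw [mul_sub, mono_sum k (2*k*m+k) t, pow_add]
      ring
    have hPval : (∫ t in (0:ℝ)..1, t ^ (2*k*m+k) * (Q k t - (k:ℝ) * t ^ (k-1)))
        = (∑ r ∈ Finset.range k, 1 / (((k*(2*m+1) : ℕ):ℝ) + r + 1)) - 1 / (2*(m:ℝ)+2) := by
      rw [intervalIntegral.integral_congr (g := fun t =>
        (∑ r ∈ Finset.range k, t ^ (2*k*m+k+r)) - (k:ℝ) * t ^ (2*k*m+k+(k-1)))
        (fun t _ => hfe t)]
      rw [intervalIntegral.integral_sub (g := fun t => (k:ℝ) * t ^ (2*k*m+k+(k-1)))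
        ((continuous_finset_sum _ fun r _ => continuous_pow _).continuousOn.intervalIntegrable)
        ((continuous_const.mul (continuous_pow _)).continuousOn.intervalIntegrable),
        intervalIntegral.integral_finset_sum (fun r _ =>
          (continuous_pow _).continuousOn.intervalIntegrable),
        intervalIntegral.integral_const_mul]
      congr 1
      · apply Finset.sum_congr rfl
        intro r _
        rw [integral_pow, one_pow, zero_pow (by omega : 2*k*m+k+r+1 ≠ 0)]
        rw [show ((2*k*m+k+r:ℕ):ℝ) + 1 = ((k*(2*m+1):ℕ):ℝ) + r + 1 by push_cast; ring]
        norm_num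
      · rw [integral_pow, one_pow, zero_pow (by omega : 2*k*m+k+(k-1)+1 ≠ 0)]
        have hc : ((2*k*m+k+(k-1) : ℕ):ℝ) + 1 = 2*(k:ℝ)*((m:ℝ)+1) := by
          push_cast [Nat.cast_sub hk1]
          ring
        rw [hc]
        have hk0 : (k:ℝ) ≠ 0 := by positivity
        have hm0 : (m:ℝ) + 1 ≠ 0 := by positivity
        field_simp
        ring
    have h2 : 2*(m+1) = 2*m+1+1 := by ring
    rw [h2, Finset.sum_range_succ, Finset.sum_range_succ, ih, hsplit, hPval]
    have hs1 : (-1:ℝ)^(2*m) = 1 := by simp [pow_mul]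
    have hs2 : (-1:ℝ)^(2*m+1) = -1 := by simp [pow_succ, pow_mul]
    rw [hs1, hs2]
    have e1 : k*(2*m+1+1) = k*(2*m+1) + k := by ring
    have e3 : H (k*(2*m+1) + k) = H (k*(2*m+1)) + ∑ r ∈ Finset.range k,
        1 / (((k*(2*m+1) : ℕ):ℝ) + r + 1) := H_add _ _
    rw [e1, e3]
    have e2 : H (2*m+1+1) = H (2*m+1) + 1/(2*(m:ℝ)+2) := by
      have h := H_add (2*m+1) 1
      simp only [Finset.sum_range_one] at h
      rw [h]
      push_cast
      ring_nf
    rw [e2]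
    ring

lemma phi_nonneg {k : ℕ} (hk : 1 ≤ k) {t : ℝ} (ht : t ∈ Set.Icc (0:ℝ) 1) :
    0 ≤ phi k t := by
  have := den_pos hk ht
  exact div_nonneg (mul_nonneg (pow_nonneg ht.1 k) (Rk_nonneg k ht.1)) this.le

lemma phi_le {k : ℕ} (hk : 1 ≤ k) {t : ℝ} (ht : t ∈ Set.Icc (0:ℝ) 1) :
    phi k t ≤ Rk k 1 := by
  have hden := den_pos hk ht
  have h1 : t ^ k * Rk k t ≤ Rk k 1 := by
    have h2 : t ^ k ≤ 1 := pow_le_one₀ ht.1 ht.2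
    have h3 : Rk k t ≤ Rk k 1 := Rk_le_one k ht
    have h4 : 0 ≤ Rk k t := Rk_nonneg k ht.1
    nlinarith [pow_nonneg ht.1 k]
  have h5 : (1:ℝ) ≤ Q k t * (1 + t ^ k) := by
    have := one_le_Q hk ht.1
    have := pow_nonneg ht.1 k
    nlinarith
  rw [phi, div_le_iff₀ hden]
  nlinarith [Rk_nonneg k (zero_le_one' ℝ)]

lemma tail_zero {k : ℕ} (hk : 1 ≤ k) :
    Tendsto (fun m : ℕ => ∫ t in (0:ℝ)..1, phi k t * t ^ (2*k*m)) atTop (𝓝 0) := by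
  have hint : ∀ N : ℕ, IntervalIntegrable (fun t => phi k t * t ^ N)
      MeasureTheory.volume 0 1 := fun N =>
    ((phi_contOn hk).mul (continuous_pow N).continuousOn).intervalIntegrable
  have hCint : ∀ N : ℕ, IntervalIntegrable (fun t : ℝ => Rk k 1 * t ^ N)
      MeasureTheory.volume 0 1 := fun N =>
    ((continuous_const.mul (continuous_pow N)).continuousOn).intervalIntegrable
  apply squeeze_zero (g := fun m : ℕ => Rk k 1 / (((2*k*m : ℕ):ℝ) + 1))
  · intro m
    apply intervalIntegral.integral_nonneg zero_le_one
    intro t ht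
    exact mul_nonneg (phi_nonneg hk ht) (pow_nonneg ht.1 _)
  · intro m
    have hmono : (∫ t in (0:ℝ)..1, phi k t * t ^ (2*k*m))
        ≤ ∫ t in (0:ℝ)..1, Rk k 1 * t ^ (2*k*m) := by
      apply intervalIntegral.integral_mono_on zero_le_one (hint _) (hCint _)
      intro t ht
      have := phi_le hk ht
      have := pow_nonneg ht.1 (2*k*m)
      nlinarith
    have hval : (∫ t in (0:ℝ)..1, Rk k 1 * t ^ (2*k*m))
        = Rk k 1 / (((2*k*m : ℕ):ℝ) + 1) := by
      rw [intervalIntegral.integral_const_mul, integral_pow, one_pow,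
        zero_pow (by omega : 2*k*m+1 ≠ 0)]
      push_cast
      ring
    linarith
  · apply Filter.Tendsto.div_atTop tendsto_const_nhds
    apply Filter.tendsto_atTop_add_const_right
    have h1 : Tendsto (fun m : ℕ => 2*k*m) atTop atTop :=
      Filter.tendsto_atTop_mono (fun m => by
        have : 1 ≤ 2*k := by omega
        calc m = 1 * m := (one_mul m).symm
        _ ≤ 2*k*m := Nat.mul_le_mul_right m this) tendsto_id
    exact tendsto_natCast_atTop_atTop.comp h1


set_option maxHeartbeats 1600000 in
/-- For `k ≥ 2`, `S_k = (1/2)·log(2k) − (1/2)·∫₀¹ Q_k(t)/(1+t^k) dt`, where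
`S_k = Σ_{n=1}^∞ (−1)^{n−1}(log k − (H_{kn} − H_n))` (the series converges). -/
theorem stmt_10 (k : ℕ) (hk : 2 ≤ k) :
    Tendsto (fun m => ∑ n ∈ Finset.range m,
        (-1 : ℝ) ^ n * (Real.log k - (H (k * (n + 1)) - H (n + 1))))
      atTop
      (𝓝 ((1 / 2) * Real.log (2 * k)
        - (1 / 2) * ∫ t in (0:ℝ)..1, Q k t / (1 + t ^ k))) := by
  have hk1 : 1 ≤ k := by omega
  set a : ℕ → ℝ := fun n => Real.log k - (H (k*(n+1)) - H (n+1)) with ha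
  -- antitone
  have hkey : ∀ n : ℕ, a n - a (n+1)
      = (∑ r ∈ Finset.range k, 1/(((k*(n+1) : ℕ):ℝ)+r+1)) - 1/((n:ℝ)+2) := by
    intro n
    have e1 : k*(n+1+1) = k*(n+1) + k := by ring
    have e3 : H (k*(n+1) + k) = H (k*(n+1)) + ∑ r ∈ Finset.range k,
        1 / (((k*(n+1) : ℕ):ℝ) + r + 1) := H_add _ _
    have e2 : H (n+1+1) = H (n+1) + 1/((n:ℝ)+2) := by
      have h := H_add (n+1) 1
      simp only [Finset.sum_range_one] at h
      rw [h]
      push_cast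
      ring_nf
    simp only [ha, e1, e3, e2]
    ring
  have hanti : Antitone a := by
    apply antitone_nat_of_succ_le
    intro n
    have hsum : (1:ℝ)/((n:ℝ)+2) ≤ ∑ r ∈ Finset.range k, 1/(((k*(n+1) : ℕ):ℝ)+r+1) := by
      have hterm : ∀ r ∈ Finset.range k,
          1/((k:ℝ)*((n:ℝ)+2)) ≤ 1/(((k*(n+1) : ℕ):ℝ)+r+1) := by
        intro r hr
        have hrk : (r:ℝ) + 1 ≤ k := by
          have := Finset.mem_range.1 hr
          exact_mod_cast Nat.succ_le_of_lt this
        apply one_div_le_one_div_of_le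
        · positivity
        · have hkpos : (0:ℝ) < k := by exact_mod_cast (by omega : 0 < k)
          push_cast
          nlinarith
      calc (1:ℝ)/((n:ℝ)+2) = ∑ _r ∈ Finset.range k, 1/((k:ℝ)*((n:ℝ)+2)) := by
            rw [Finset.sum_const, Finset.card_range, nsmul_eq_mul]
            have hk0 : (k:ℝ) ≠ 0 := by positivity
            field_simp
        _ ≤ _ := Finset.sum_le_sum hterm
    have h4 : 0 ≤ a n - a (n+1) := by rw [hkey n]; linarith
    linarith
  -- a tends to 0
  have ha0 : Tendsto a atTop (𝓝 0) := by
    have hu : Tendsto (fun n : ℕ => k*(n+1)) atTop atTop :=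
      Filter.tendsto_atTop_mono (fun n => by
        calc n ≤ n + 1 := Nat.le_succ n
        _ = 1 * (n+1) := (one_mul _).symm
        _ ≤ k * (n+1) := Nat.mul_le_mul_right _ hk1) tendsto_id
    have hv : Tendsto (fun n : ℕ => n+1) atTop atTop :=
      Filter.tendsto_atTop_mono (fun n => Nat.le_succ n) tendsto_id
    have h1 : Tendsto (fun n : ℕ => (harmonic (k*(n+1)) : ℝ) - Real.log ((k*(n+1) : ℕ):ℝ))
        atTop (𝓝 Real.eulerMascheroniConstant) := Real.tendsto_harmonic_sub_log.comp hu
    have h2 : Tendsto (fun n : ℕ => (harmonic (n+1) : ℝ) - Real.log ((n+1 : ℕ):ℝ))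
        atTop (𝓝 Real.eulerMascheroniConstant) := Real.tendsto_harmonic_sub_log.comp hv
    have h3 := h2.sub h1
    rw [sub_self] at h3
    apply h3.congr
    intro n
    have hlog : Real.log ((k*(n+1) : ℕ):ℝ) = Real.log k + Real.log ((n+1 : ℕ):ℝ) := by
      push_cast
      rw [Real.log_mul (by positivity) (by positivity)]
    rw [ha]
    simp only [H_eq, hlog]
    push_cast
    ring
  obtain ⟨l, hl⟩ := hanti.tendsto_alternating_series_of_tendsto_zero ha0
  have h2m : Tendsto (fun m : ℕ => 2*m) atTop atTop :=
    Filter.tendsto_atTop_mono (fun m => by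
      calc m = 1*m := (one_mul m).symm
      _ ≤ 2*m := Nat.mul_le_mul_right m (by omega)) tendsto_id
  have hev : Tendsto (fun m : ℕ => ∑ n ∈ Finset.range (2*m), (-1:ℝ)^n * a n)
      atTop (𝓝 l) := hl.comp h2m
  have hev' : Tendsto (fun m : ℕ => ∑ n ∈ Finset.range (2*m), (-1:ℝ)^n * a n)
      atTop (𝓝 (∫ t in (0:ℝ)..1, phi k t)) := by
    have heq : ∀ m : ℕ, (∑ n ∈ Finset.range (2*m), (-1:ℝ)^n * a n)
        = (∫ t in (0:ℝ)..1, phi k t) - ∫ t in (0:ℝ)..1, phi k t * t ^ (2*k*m) := by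
      intro m
      rw [ha, even_sum hk m]
      have hfe : (fun t : ℝ => phi k t * (1 - t ^ (2*k*m)))
          = fun t => phi k t - phi k t * t ^ (2*k*m) := by
        funext t; ring
      rw [hfe, intervalIntegral.integral_sub (g := fun t => phi k t * t ^ (2*k*m))
        ((phi_contOn hk1).intervalIntegrable)
        (((phi_contOn hk1).mul (continuous_pow _).continuousOn).intervalIntegrable)]
    rw [show (∫ t in (0:ℝ)..1, phi k t)
        = (∫ t in (0:ℝ)..1, phi k t) - 0 by ring]
    exact Tendsto.congr (fun m => (heq m).symm) (tendsto_const_nhds.sub (tail_zero hk1))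
  have hl_eq : l = ∫ t in (0:ℝ)..1, phi k t := tendsto_nhds_unique hev hev'
  rw [← int_phi hk1, ← hl_eq]
  exact hl
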